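/- If a nonnegative sequence (E_i) satisfies E_0 = 0 and E_{i+1} ≤ (1 - 1/(2δ))·E_i + (2(δ²−1)/δ)·c for all i, where δ ≥ 1 and c ≥ 0, then E_i ≤ 4δ²·c for every i. -/

import Mathlib

theorem bounded_memory_recursion (δ c : ℝ) (hδ : 1 ≤ δ) (hc : 0 ≤ c)
    (E : ℕ → ℝ) (hE : ∀ i, 0 ≤ E i) (h0 : E 0 = 0)
    (hrec : ∀ i, E (i + 1) ≤ (1 - 1 / (2 * δ)) * E i + (2 * (δ ^ 2 - 1) / δ) * c) :
    ∀ i, E i ≤ 4 * δ ^ 2 * c := by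
  have hδ0 : 0 < δ := by linarith
  intro i
  induction i with
  | zero => rw [h0]; positivity
  | succ n ih =>
    have h := hrec n
    have h1 : (1 - 1 / (2 * δ)) * E n ≤ (1 - 1 / (2 * δ)) * (4 * δ ^ 2 * c) := by
      apply mul_le_mul_of_nonneg_left ih
      have : 1 / (2 * δ) ≤ 1 := by
        rw [div_le_one (by linarith)]; linarith
      linarith
    have h2 : (1 - 1 / (2 * δ)) * (4 * δ ^ 2 * c) + (2 * (δ ^ 2 - 1) / δ) * c ≤ 4 * δ ^ 2 * c := by
      have hne : δ ≠ 0 := ne_of_gt hδ0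
      field_simp
      nlinarith [mul_nonneg hc hδ0.le, sq_nonneg δ]
    linarith
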